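/- Define σ_n = e^{−iδ} for n ≤ −1 and σ_n = e^{iδ} for n ≥ 0. Let f = (f_n)_{n∈ℤ₀} ∈ l₀² and let y = (y_n)_{n∈ℤ} be such that its restriction to ℤ₀ lies in l₀², (q_n y_n)_{n∈ℤ₀} ∈ l₀², −Δ²y_{n−1} + q_n y_n = f_n for all n ∈ ℤ₀, and y_{−1} = y₁, Δy_{−1} = e^{2iδ} Δy₁. Then the energy identity holds: (cos δ) ∑_{n∈ℤ₀} (|Δy_n|² + q_n |y_n|²) = Re ∑_{n∈ℤ₀} σ_n f_n conj(y_n). -/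

import Mathlib

open Filter Topology


open ComplexConjugate

/-- The index set ℤ₀ = ℤ \ {0,1} as a subtype. -/
abbrev Z0 := {n : ℤ // n ≠ 0 ∧ n ≠ 1}

noncomputable def e2 (δ : ℝ) : ℂ := Complex.exp (2 * (δ : ℂ) * Complex.I)

/-- Extension of y : ℤ → ℂ by the auxiliary values y₁ = y_{−1} and
y₀ = (1 − e^{2iδ}) y_{−1} + e^{2iδ} y₂ coming from the impulse conditions. -/
noncomputable def ext (δ : ℝ) (y : ℤ → ℂ) : ℤ → ℂ := fun n =>
  if n = 0 then (1 - e2 δ) * y (-1) + e2 δ * y 2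
  else if n = 1 then y (-1)
  else y n

/-- (Ly)_n = −Δ²y_{n−1} + q_n y_n for n ∈ ℤ₀, using the auxiliary values. -/
noncomputable def Lop (δ : ℝ) (q : ℤ → ℝ) (y : ℤ → ℂ) (n : ℤ) : ℂ :=
  -(ext δ y (n + 1) - 2 * ext δ y n + ext δ y (n - 1)) + (q n : ℂ) * y n

/-- Membership in the domain D = { y ∈ l₀² : (qₙ yₙ) ∈ l₀² }. -/
def MemD (q : ℤ → ℝ) (y : ℤ → ℂ) : Prop :=
  Summable (fun n : Z0 => ‖y (n : ℤ)‖ ^ 2) ∧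
  Summable (fun n : Z0 => ‖(q (n : ℤ) : ℂ) * y (n : ℤ)‖ ^ 2)


/-- σ_n = e^{−iδ} for n ≤ −1 and σ_n = e^{iδ} for n ≥ 0. -/
noncomputable def sigma (δ : ℝ) (n : ℤ) : ℂ :=
  if n ≤ -1 then Complex.exp (-(δ : ℂ) * Complex.I) else Complex.exp ((δ : ℂ) * Complex.I)

private lemma sumsq_helper {α : Type*} {a b : α → ℂ}
    (ha : Summable fun n => ‖a n‖ ^ 2) (hb : Summable fun n => ‖b n‖ ^ 2) :
    Summable fun n => ‖a n‖ * ‖b n‖ :=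
  Summable.of_nonneg_of_le (fun n => by positivity)
    (fun n => by nlinarith [sq_nonneg (‖a n‖ - ‖b n‖), norm_nonneg (a n), norm_nonneg (b n)])
    ((ha.add hb).mul_left (1/2))

private lemma summable_mul_conj {α : Type*} {a b : α → ℂ}
    (ha : Summable fun n => ‖a n‖ ^ 2) (hb : Summable fun n => ‖b n‖ ^ 2) :
    Summable fun n => a n * conj (b n) := by
  apply Summable.of_norm
  exact (sumsq_helper ha hb).congr fun n => by simp [norm_mul]

private lemma tsum_telescope' {h F : ℕ → ℂ}
    (hFh : ∀ k, F k = h k - h (k + 1)) (hF : Summable F)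
    (h0 : Tendsto h atTop (𝓝 0)) : ∑' k, F k = h 0 := by
  have hps := hF.hasSum.tendsto_sum_nat
  have heq : ∀ n, ∑ i ∈ Finset.range n, F i = h 0 - h n := by
    intro n
    rw [Finset.sum_congr rfl fun i _ => hFh i]
    exact Finset.sum_range_sub' h n
  have hps' : Tendsto (fun n => h 0 - h n) atTop (𝓝 (∑' k, F k)) :=
    (tendsto_congr heq).mp hps
  have h2 : Tendsto (fun n => h 0 - h n) atTop (𝓝 (h 0 - 0)) :=
    tendsto_const_nhds.sub h0
  simpa using tendsto_nhds_unique hps' h2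

private def Spos : Set ℤ := {n | 2 ≤ n}
private def Sneg : Set ℤ := {n | n ≤ -1}

private def eqPos : ℕ ≃ Spos where
  toFun k := ⟨(k : ℤ) + 2, by simp only [Spos, Set.mem_setOf_eq]; omega⟩
  invFun n := (n.1 - 2).toNat
  left_inv k := by simp
  right_inv n := by
    obtain ⟨n, hn⟩ := n
    simp only [Spos, Set.mem_setOf_eq] at hn
    apply Subtype.ext
    simp only
    omega

private def eqNeg : ℕ ≃ Sneg where
  toFun k := ⟨-((k : ℤ) + 1), by simp only [Sneg, Set.mem_setOf_eq]; omega⟩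
  invFun n := (-(n.1) - 1).toNat
  left_inv k := by simp
  right_inv n := by
    obtain ⟨n, hn⟩ := n
    simp only [Sneg, Set.mem_setOf_eq] at hn
    apply Subtype.ext
    simp only
    omega

private def eqvZ0 : Z0 ≃ ↑(Spos ∪ Sneg) :=
  Equiv.subtypeEquivRight (fun n => by
    simp only [Set.mem_union, Spos, Sneg, Set.mem_setOf_eq]
    omega)

private lemma split_Z0 {E : Type*} [NormedAddCommGroup E] (F : ℤ → E)
    (hp : Summable fun k : ℕ => F ((k : ℤ) + 2))
    (hn : Summable fun k : ℕ => F (-((k : ℤ) + 1))) :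
    Summable (fun n : Z0 => F (n : ℤ)) ∧
      ∑' n : Z0, F (n : ℤ) =
        (∑' k : ℕ, F ((k : ℤ) + 2)) + ∑' k : ℕ, F (-((k : ℤ) + 1)) := by
  have hps : Summable (fun n : Spos => F (n : ℤ)) :=
    (Equiv.summable_iff eqPos (f := fun n : Spos => F (n : ℤ))).mp hp
  have hns : Summable (fun n : Sneg => F (n : ℤ)) :=
    (Equiv.summable_iff eqNeg (f := fun n : Sneg => F (n : ℤ))).mp hn
  have hd : Disjoint Spos Sneg := by
    rw [Set.disjoint_left]
    intro a ha hb
    simp only [Spos, Sneg, Set.mem_setOf_eq] at ha hb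
    omega
  have hu : Summable (fun n : ↑(Spos ∪ Sneg) => F (n : ℤ)) :=
    (hps.hasSum.add_disjoint hd hns.hasSum).summable
  constructor
  · exact (Equiv.summable_iff eqvZ0).mpr hu
  · calc ∑' n : Z0, F (n : ℤ)
        = ∑' n : ↑(Spos ∪ Sneg), F (n : ℤ) :=
          Equiv.tsum_eq eqvZ0 (fun n : ↑(Spos ∪ Sneg) => F (n : ℤ))
      _ = (∑' n : Spos, F (n : ℤ)) + ∑' n : Sneg, F (n : ℤ) :=
          Summable.tsum_union_disjoint (f := F) hd hps hns
      _ = (∑' k : ℕ, F ((k : ℤ) + 2)) + ∑' k : ℕ, F (-((k : ℤ) + 1)) := by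
          rw [← Equiv.tsum_eq eqPos (fun n : Spos => F (n : ℤ)),
              ← Equiv.tsum_eq eqNeg (fun n : Sneg => F (n : ℤ))]
          rfl

private lemma summable_ofs {F : ℤ → ℝ} (hF : Summable fun n : Z0 => F (n : ℤ))
    (c : ℤ) (hc : 2 ≤ c) : Summable fun k : ℕ => F ((k : ℤ) + c) :=
  hF.comp_injective (i := fun k : ℕ => (⟨(k : ℤ) + c, by omega, by omega⟩ : Z0))
    (fun a b hab => by
      have := congrArg (fun z : Z0 => z.1) hab
      simp only at this
      omega)

private lemma summable_negs {F : ℤ → ℝ} (hF : Summable fun n : Z0 => F (n : ℤ)) :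
    Summable fun k : ℕ => F (-((k : ℤ) + 1)) :=
  hF.comp_injective (i := fun k : ℕ => (⟨-((k : ℤ) + 1), by omega, by omega⟩ : Z0))
    (fun a b hab => by
      have := congrArg (fun z : Z0 => z.1) hab
      simp only at this
      omega)

private lemma tendsto_zero_of_sq {v : ℕ → ℂ} (h : Summable fun k => ‖v k‖ ^ 2) :
    Tendsto v atTop (𝓝 0) := by
  rw [tendsto_zero_iff_norm_tendsto_zero]
  have h2 : Tendsto (fun k => Real.sqrt (‖v k‖ ^ 2)) atTop (𝓝 (Real.sqrt 0)) :=
    (Real.continuous_sqrt.tendsto 0).comp h.tendsto_atTop_zero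
  simpa [Real.sqrt_sq, norm_nonneg] using h2

private noncomputable def Gbd (y : ℤ → ℂ) (n : ℤ) : ℂ := (y n - y (n - 1)) * conj (y n)

/-- the energy identity
(cos δ) ∑_{n∈ℤ₀} (|Δy_n|² + q_n |y_n|²) = Re ∑_{n∈ℤ₀} σ_n f_n conj(y_n)
for a solution y ∈ D of Ly = f with the impulse conditions, f ∈ l₀². -/
theorem energy_identity (δ : ℝ) (hδ : 0 ≤ δ ∧ δ < Real.pi / 2)
    (q : ℤ → ℝ) (c : ℝ) (hc : 0 < c) (hq : ∀ n : ℤ, n ≠ 0 → n ≠ 1 → c ≤ q n)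
    (f y : ℤ → ℂ)
    (hf : Summable (fun n : Z0 => ‖f (n : ℤ)‖ ^ 2))
    (hyl2 : Summable (fun n : Z0 => ‖y (n : ℤ)‖ ^ 2))
    (hqy : Summable (fun n : Z0 => ‖(q (n : ℤ) : ℂ) * y (n : ℤ)‖ ^ 2))
    (heq : ∀ n : ℤ, n ≠ 0 → n ≠ 1 →
      -(y (n + 1) - 2 * y n + y (n - 1)) + (q n : ℂ) * y n = f n)
    (himp1 : y (-1) = y 1)
    (himp2 : y 0 - y (-1) = e2 δ * (y 2 - y 1)) :
    Summable (fun n : Z0 =>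
      ‖y ((n : ℤ) + 1) - y (n : ℤ)‖ ^ 2 + q (n : ℤ) * ‖y (n : ℤ)‖ ^ 2) ∧
    Real.cos δ *
        (∑' n : Z0, (‖y ((n : ℤ) + 1) - y (n : ℤ)‖ ^ 2 + q (n : ℤ) * ‖y (n : ℤ)‖ ^ 2)) =
      (∑' n : Z0, sigma δ (n : ℤ) * f (n : ℤ) * conj (y (n : ℤ))).re := by
  -- notation
  set eP : ℂ := Complex.exp ((δ : ℂ) * Complex.I) with heP
  set eN : ℂ := Complex.exp (-(δ : ℂ) * Complex.I) with heN
  have hePne : eP ≠ 0 := Complex.exp_ne_zero _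
  have heNinv : eN = eP⁻¹ := by
    rw [heP, heN, ← Complex.exp_neg]
    ring_nf
  have he2 : e2 δ = eP * eP := by
    rw [e2, heP, ← Complex.exp_add]
    ring_nf
  have hconjP : conj eP = eN := by
    rw [heP, heN, ← Complex.exp_conj]
    congr 1
    simp [Complex.conj_I]
  -- basic ℕ-indexed summabilities
  have hy2 : Summable fun k : ℕ => ‖y ((k : ℤ) + 2)‖ ^ 2 :=
    summable_ofs (F := fun n => ‖y n‖ ^ 2) hyl2 2 le_rfl
  have hy3 : Summable fun k : ℕ => ‖y ((k : ℤ) + 3)‖ ^ 2 :=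
    summable_ofs (F := fun n => ‖y n‖ ^ 2) hyl2 3 (by norm_num)
  have hyn1 : Summable fun k : ℕ => ‖y (-((k : ℤ) + 1))‖ ^ 2 :=
    summable_negs (F := fun n => ‖y n‖ ^ 2) hyl2
  have hyn0 : Summable fun k : ℕ => ‖y (-(k : ℤ))‖ ^ 2 := by
    refine (summable_nat_add_iff 1).mp (hyn1.congr fun k => ?_)
    congr 2
  have hf2 : Summable fun k : ℕ => ‖f ((k : ℤ) + 2)‖ ^ 2 :=
    summable_ofs (F := fun n => ‖f n‖ ^ 2) hf 2 le_rfl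
  have hfn1 : Summable fun k : ℕ => ‖f (-((k : ℤ) + 1))‖ ^ 2 :=
    summable_negs (F := fun n => ‖f n‖ ^ 2) hf
  have hqy2 : Summable fun k : ℕ => ‖(q ((k : ℤ) + 2) : ℂ) * y ((k : ℤ) + 2)‖ ^ 2 :=
    summable_ofs (F := fun n => ‖(q n : ℂ) * y n‖ ^ 2) hqy 2 le_rfl
  have hqyn1 : Summable fun k : ℕ => ‖(q (-((k : ℤ) + 1)) : ℂ) * y (-((k : ℤ) + 1))‖ ^ 2 :=
    summable_negs (F := fun n => ‖(q n : ℂ) * y n‖ ^ 2) hqy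
  -- difference-term summability
  have hsq_sub : ∀ a b : ℂ, ‖a - b‖ ^ 2 ≤ 2 * ‖a‖ ^ 2 + 2 * ‖b‖ ^ 2 := fun a b => by
    nlinarith [norm_sub_le a b, norm_nonneg a, norm_nonneg b, norm_nonneg (a - b),
      sq_nonneg (‖a‖ - ‖b‖)]
  have hu_pos : Summable fun k : ℕ => ‖y ((k : ℤ) + 2 + 1) - y ((k : ℤ) + 2)‖ ^ 2 := by
    refine Summable.of_nonneg_of_le (fun k => by positivity) (fun k => ?_)
      ((hy3.mul_left 2).add (hy2.mul_left 2))
    have h32 : ∀ k : ℤ, k + 2 + 1 = k + 3 := fun k => by ring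
    rw [h32]
    exact hsq_sub _ _
  have hu_neg : Summable fun k : ℕ => ‖y (-((k : ℤ) + 1) + 1) - y (-((k : ℤ) + 1))‖ ^ 2 := by
    refine Summable.of_nonneg_of_le (fun k => by positivity) (fun k => ?_)
      ((hyn0.mul_left 2).add (hyn1.mul_left 2))
    have h32 : ∀ k : ℤ, -(k + 1) + 1 = -k := fun k => by ring
    rw [h32]
    exact hsq_sub _ _
  -- q-part summability
  have hq_pos : Summable fun k : ℕ => q ((k : ℤ) + 2) * ‖y ((k : ℤ) + 2)‖ ^ 2 := by
    refine (sumsq_helper (a := fun k : ℕ => ((q ((k : ℤ) + 2) : ℂ)) * y ((k : ℤ) + 2))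
      (b := fun k : ℕ => y ((k : ℤ) + 2)) hqy2 hy2).congr fun k => ?_
    have hqpos : (0 : ℝ) < q ((k : ℤ) + 2) := lt_of_lt_of_le hc (hq _ (by omega) (by omega))
    rw [norm_mul, Complex.norm_real, Real.norm_eq_abs, abs_of_pos hqpos]
    ring
  have hq_neg : Summable fun k : ℕ => q (-((k : ℤ) + 1)) * ‖y (-((k : ℤ) + 1))‖ ^ 2 := by
    refine (sumsq_helper (a := fun k : ℕ => ((q (-((k : ℤ) + 1)) : ℂ)) * y (-((k : ℤ) + 1)))
      (b := fun k : ℕ => y (-((k : ℤ) + 1))) hqyn1 hyn1).congr fun k => ?_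
    have hqpos : (0 : ℝ) < q (-((k : ℤ) + 1)) := lt_of_lt_of_le hc (hq _ (by omega) (by omega))
    rw [norm_mul, Complex.norm_real, Real.norm_eq_abs, abs_of_pos hqpos]
    ring
  have hGp : Summable fun k : ℕ =>
      ‖y ((k : ℤ) + 2 + 1) - y ((k : ℤ) + 2)‖ ^ 2 + q ((k : ℤ) + 2) * ‖y ((k : ℤ) + 2)‖ ^ 2 :=
    hu_pos.add hq_pos
  have hGm : Summable fun k : ℕ =>
      ‖y (-((k : ℤ) + 1) + 1) - y (-((k : ℤ) + 1))‖ ^ 2 +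
        q (-((k : ℤ) + 1)) * ‖y (-((k : ℤ) + 1))‖ ^ 2 :=
    hu_neg.add hq_neg
  -- real split
  obtain ⟨hsumR, hsplitR⟩ :=
    split_Z0 (F := fun n : ℤ => ‖y (n + 1) - y n‖ ^ 2 + q n * ‖y n‖ ^ 2) hGp hGm
  refine ⟨hsumR, ?_⟩
  -- key algebraic identity
  have hkey : ∀ n : ℤ, n ≠ 0 → n ≠ 1 →
      f n * conj (y n) =
        ((‖y (n + 1) - y n‖ ^ 2 + q n * ‖y n‖ ^ 2 : ℝ) : ℂ) +
          (Gbd y n - Gbd y (n + 1)) := by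
    intro n h0 h1
    rw [← heq n h0 h1]
    simp only [Gbd]
    rw [show n + 1 - 1 = n by ring]
    push_cast
    rw [← Complex.mul_conj' (y n), ← Complex.mul_conj' (y (n + 1) - y n)]
    simp only [map_sub]
    ring
  -- limits
  have hconjlim : ∀ {v : ℕ → ℂ}, Tendsto v atTop (𝓝 0) →
      Tendsto (fun k => conj (v k)) atTop (𝓝 0) := by
    intro v hv
    have := (Complex.continuous_conj.tendsto 0).comp hv
    simpa [Function.comp_def] using this
  have hyz2 : Tendsto (fun k : ℕ => y ((k : ℤ) + 2)) atTop (𝓝 0) := tendsto_zero_of_sq hy2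
  have hyz1 : Tendsto (fun k : ℕ => y ((k : ℤ) + 1)) atTop (𝓝 0) :=
    (tendsto_add_atTop_iff_nat 1).mp (hyz2.congr fun k => congrArg y (by push_cast; ring))
  have hGbd_pos : Tendsto (fun k : ℕ => Gbd y ((k : ℤ) + 2)) atTop (𝓝 0) := by
    have h := (hyz2.sub hyz1).mul (hconjlim hyz2)
    rw [show ((0 : ℂ) - 0) * 0 = 0 by ring] at h
    refine h.congr fun k => ?_
    simp only [Gbd]
    rw [show (k : ℤ) + 2 - 1 = (k : ℤ) + 1 by ring]
  have hyzn1 : Tendsto (fun k : ℕ => y (-((k : ℤ) + 1))) atTop (𝓝 0) := tendsto_zero_of_sq hyn1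
  have hyzn0 : Tendsto (fun k : ℕ => y (-(k : ℤ))) atTop (𝓝 0) :=
    (tendsto_add_atTop_iff_nat 1).mp (hyzn1.congr fun k => congrArg y (by push_cast; ring))
  have hGbd_neg : Tendsto (fun k : ℕ => Gbd y (-(k : ℤ))) atTop (𝓝 0) := by
    have h := (hyzn0.sub hyzn1).mul (hconjlim hyzn0)
    rw [show ((0 : ℂ) - 0) * 0 = 0 by ring] at h
    refine h.congr fun k => ?_
    simp only [Gbd]
    rw [show -(k : ℤ) - 1 = -((k : ℤ) + 1) by ring]
  -- positive-side complex sum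
  have hfc2 : Summable fun k : ℕ => f ((k : ℤ) + 2) * conj (y ((k : ℤ) + 2)) :=
    summable_mul_conj hf2 hy2
  have hGpC : Summable fun k : ℕ =>
      ((‖y ((k : ℤ) + 2 + 1) - y ((k : ℤ) + 2)‖ ^ 2 +
        q ((k : ℤ) + 2) * ‖y ((k : ℤ) + 2)‖ ^ 2 : ℝ) : ℂ) :=
    Complex.summable_ofReal.mpr hGp
  have hFp_summable : Summable
      (fun k : ℕ => Gbd y ((k : ℤ) + 2) - Gbd y ((k : ℤ) + 2 + 1)) := by
    have h1 : (fun k : ℕ => Gbd y ((k : ℤ) + 2) - Gbd y ((k : ℤ) + 2 + 1)) =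
        fun k : ℕ => f ((k : ℤ) + 2) * conj (y ((k : ℤ) + 2)) -
          ((‖y ((k : ℤ) + 2 + 1) - y ((k : ℤ) + 2)‖ ^ 2 +
            q ((k : ℤ) + 2) * ‖y ((k : ℤ) + 2)‖ ^ 2 : ℝ) : ℂ) := funext fun k => by
      rw [hkey ((k : ℤ) + 2) (by omega) (by omega)]
      ring
    rw [h1]
    exact hfc2.sub hGpC
  have htel_p : ∑' k : ℕ, (Gbd y ((k : ℤ) + 2) - Gbd y ((k : ℤ) + 2 + 1)) = Gbd y 2 := by
    have h := tsum_telescope' (h := fun k : ℕ => Gbd y ((k : ℤ) + 2))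
      (F := fun k : ℕ => Gbd y ((k : ℤ) + 2) - Gbd y ((k : ℤ) + 2 + 1))
      (fun k => by
        show Gbd y ((k : ℤ) + 2) - Gbd y ((k : ℤ) + 2 + 1) =
          Gbd y ((k : ℤ) + 2) - Gbd y (((k + 1 : ℕ) : ℤ) + 2)
        rw [show ((k + 1 : ℕ) : ℤ) + 2 = (k : ℤ) + 2 + 1 by push_cast; ring])
      hFp_summable hGbd_pos
    simpa using h
  have hTp : ∑' k : ℕ, f ((k : ℤ) + 2) * conj (y ((k : ℤ) + 2)) =
      ((∑' k : ℕ, (‖y ((k : ℤ) + 2 + 1) - y ((k : ℤ) + 2)‖ ^ 2 +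
        q ((k : ℤ) + 2) * ‖y ((k : ℤ) + 2)‖ ^ 2) : ℝ) : ℂ) + Gbd y 2 := by
    have h1 : (fun k : ℕ => f ((k : ℤ) + 2) * conj (y ((k : ℤ) + 2))) =
        fun k : ℕ => ((‖y ((k : ℤ) + 2 + 1) - y ((k : ℤ) + 2)‖ ^ 2 +
          q ((k : ℤ) + 2) * ‖y ((k : ℤ) + 2)‖ ^ 2 : ℝ) : ℂ) +
          (Gbd y ((k : ℤ) + 2) - Gbd y ((k : ℤ) + 2 + 1)) :=
      funext fun k => hkey ((k : ℤ) + 2) (by omega) (by omega)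
    rw [h1, Summable.tsum_add hGpC hFp_summable, htel_p, Complex.ofReal_tsum]
  -- negative-side complex sum
  have hfcn : Summable fun k : ℕ => f (-((k : ℤ) + 1)) * conj (y (-((k : ℤ) + 1))) :=
    summable_mul_conj hfn1 hyn1
  have hGmC : Summable fun k : ℕ =>
      ((‖y (-((k : ℤ) + 1) + 1) - y (-((k : ℤ) + 1))‖ ^ 2 +
        q (-((k : ℤ) + 1)) * ‖y (-((k : ℤ) + 1))‖ ^ 2 : ℝ) : ℂ) :=
    Complex.summable_ofReal.mpr hGm
  have hFm_summable : Summable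
      (fun k : ℕ => Gbd y (-((k : ℤ) + 1)) - Gbd y (-((k : ℤ) + 1) + 1)) := by
    have h1 : (fun k : ℕ => Gbd y (-((k : ℤ) + 1)) - Gbd y (-((k : ℤ) + 1) + 1)) =
        fun k : ℕ => f (-((k : ℤ) + 1)) * conj (y (-((k : ℤ) + 1))) -
          ((‖y (-((k : ℤ) + 1) + 1) - y (-((k : ℤ) + 1))‖ ^ 2 +
            q (-((k : ℤ) + 1)) * ‖y (-((k : ℤ) + 1))‖ ^ 2 : ℝ) : ℂ) := funext fun k => by
      rw [hkey (-((k : ℤ) + 1)) (by omega) (by omega)]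
      ring
    rw [h1]
    exact hfcn.sub hGmC
  have htel_m : ∑' k : ℕ, (Gbd y (-((k : ℤ) + 1)) - Gbd y (-((k : ℤ) + 1) + 1)) =
      -(Gbd y 0) := by
    have h := tsum_telescope' (h := fun k : ℕ => -(Gbd y (-(k : ℤ))))
      (F := fun k : ℕ => Gbd y (-((k : ℤ) + 1)) - Gbd y (-((k : ℤ) + 1) + 1))
      (fun k => by
        show Gbd y (-((k : ℤ) + 1)) - Gbd y (-((k : ℤ) + 1) + 1) =
          -Gbd y (-(k : ℤ)) - -Gbd y (-((k + 1 : ℕ) : ℤ))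
        rw [show -((k : ℤ) + 1) + 1 = -(k : ℤ) by ring,
          show -(((k + 1 : ℕ)) : ℤ) = -((k : ℤ) + 1) by push_cast; ring]
        ring)
      hFm_summable (by simpa using hGbd_neg.neg)
    simpa using h
  have hTm : ∑' k : ℕ, f (-((k : ℤ) + 1)) * conj (y (-((k : ℤ) + 1))) =
      ((∑' k : ℕ, (‖y (-((k : ℤ) + 1) + 1) - y (-((k : ℤ) + 1))‖ ^ 2 +
        q (-((k : ℤ) + 1)) * ‖y (-((k : ℤ) + 1))‖ ^ 2) : ℝ) : ℂ) - Gbd y 0 := by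
    have h1 : (fun k : ℕ => f (-((k : ℤ) + 1)) * conj (y (-((k : ℤ) + 1)))) =
        fun k : ℕ => ((‖y (-((k : ℤ) + 1) + 1) - y (-((k : ℤ) + 1))‖ ^ 2 +
          q (-((k : ℤ) + 1)) * ‖y (-((k : ℤ) + 1))‖ ^ 2 : ℝ) : ℂ) +
          (Gbd y (-((k : ℤ) + 1)) - Gbd y (-((k : ℤ) + 1) + 1)) :=
      funext fun k => hkey (-((k : ℤ) + 1)) (by omega) (by omega)
    rw [h1, Summable.tsum_add hGmC hFm_summable, htel_m, Complex.ofReal_tsum]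
    ring
  -- sigma values
  have hsigp : ∀ k : ℕ, sigma δ ((k : ℤ) + 2) = eP := fun k => by
    rw [sigma, if_neg (by omega)]
  have hsign : ∀ k : ℕ, sigma δ (-((k : ℤ) + 1)) = eN := fun k => by
    rw [sigma, if_pos (by omega)]
  -- complex split
  have hCp : Summable fun k : ℕ =>
      sigma δ ((k : ℤ) + 2) * f ((k : ℤ) + 2) * conj (y ((k : ℤ) + 2)) :=
    (hfc2.mul_left eP).congr fun k => by rw [hsigp k]; ring
  have hCm : Summable fun k : ℕ =>
      sigma δ (-((k : ℤ) + 1)) * f (-((k : ℤ) + 1)) * conj (y (-((k : ℤ) + 1))) :=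
    (hfcn.mul_left eN).congr fun k => by rw [hsign k]; ring
  obtain ⟨hsumC, hsplitC⟩ :=
    split_Z0 (F := fun n : ℤ => sigma δ n * f n * conj (y n)) hCp hCm
  have hTP2 : ∑' k : ℕ,
      sigma δ ((k : ℤ) + 2) * f ((k : ℤ) + 2) * conj (y ((k : ℤ) + 2)) =
      eP * (((∑' k : ℕ, (‖y ((k : ℤ) + 2 + 1) - y ((k : ℤ) + 2)‖ ^ 2 +
        q ((k : ℤ) + 2) * ‖y ((k : ℤ) + 2)‖ ^ 2) : ℝ) : ℂ) + Gbd y 2) := by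
    calc ∑' k : ℕ, sigma δ ((k : ℤ) + 2) * f ((k : ℤ) + 2) * conj (y ((k : ℤ) + 2))
        = ∑' k : ℕ, eP * (f ((k : ℤ) + 2) * conj (y ((k : ℤ) + 2))) :=
          tsum_congr fun k => by rw [hsigp k]; ring
      _ = eP * ∑' k : ℕ, f ((k : ℤ) + 2) * conj (y ((k : ℤ) + 2)) := tsum_mul_left
      _ = _ := by rw [hTp]
  have hTM2 : ∑' k : ℕ,
      sigma δ (-((k : ℤ) + 1)) * f (-((k : ℤ) + 1)) * conj (y (-((k : ℤ) + 1))) =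
      eN * (((∑' k : ℕ, (‖y (-((k : ℤ) + 1) + 1) - y (-((k : ℤ) + 1))‖ ^ 2 +
        q (-((k : ℤ) + 1)) * ‖y (-((k : ℤ) + 1))‖ ^ 2) : ℝ) : ℂ) - Gbd y 0) := by
    calc ∑' k : ℕ, sigma δ (-((k : ℤ) + 1)) * f (-((k : ℤ) + 1)) * conj (y (-((k : ℤ) + 1)))
        = ∑' k : ℕ, eN * (f (-((k : ℤ) + 1)) * conj (y (-((k : ℤ) + 1)))) :=
          tsum_congr fun k => by rw [hsign k]; ring
      _ = eN * ∑' k : ℕ, f (-((k : ℤ) + 1)) * conj (y (-((k : ℤ) + 1))) := tsum_mul_left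
      _ = _ := by rw [hTm]
  -- boundary term
  have hy0 : y 0 = y 1 + (eP * eP) * (y 2 - y 1) := by
    have h' := himp2
    rw [himp1] at h'
    rw [← he2]
    linear_combination h'
  have hbd : eP * Gbd y 2 - eN * Gbd y 0 =
      (eP - eN) * ((y 2 - y 1) * conj (y 2 - y 1)) := by
    simp only [Gbd]
    rw [show (2 : ℤ) - 1 = 1 by norm_num, show (0 : ℤ) - 1 = -1 by norm_num, himp1, hy0]
    simp only [map_add, map_mul, map_sub, hconjP]
    rw [heNinv]
    field_simp
    ring
  -- real parts
  have hreP : eP.re = Real.cos δ := Complex.exp_ofReal_mul_I_re δ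
  have hreN : eN.re = Real.cos δ := by
    rw [heN, show -(δ : ℂ) * Complex.I = ((-δ : ℝ) : ℂ) * Complex.I by push_cast; ring,
      Complex.exp_ofReal_mul_I_re, Real.cos_neg]
  -- final assembly
  rw [hsplitR, hsplitC, hTP2, hTM2]
  rw [show eP * (((∑' k : ℕ, (‖y ((k : ℤ) + 2 + 1) - y ((k : ℤ) + 2)‖ ^ 2 +
        q ((k : ℤ) + 2) * ‖y ((k : ℤ) + 2)‖ ^ 2) : ℝ) : ℂ) + Gbd y 2) +
      eN * (((∑' k : ℕ, (‖y (-((k : ℤ) + 1) + 1) - y (-((k : ℤ) + 1))‖ ^ 2 +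
        q (-((k : ℤ) + 1)) * ‖y (-((k : ℤ) + 1))‖ ^ 2) : ℝ) : ℂ) - Gbd y 0) =
      eP * ((∑' k : ℕ, (‖y ((k : ℤ) + 2 + 1) - y ((k : ℤ) + 2)‖ ^ 2 +
        q ((k : ℤ) + 2) * ‖y ((k : ℤ) + 2)‖ ^ 2) : ℝ) : ℂ) +
      eN * ((∑' k : ℕ, (‖y (-((k : ℤ) + 1) + 1) - y (-((k : ℤ) + 1))‖ ^ 2 +
        q (-((k : ℤ) + 1)) * ‖y (-((k : ℤ) + 1))‖ ^ 2) : ℝ) : ℂ) +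
      (eP * Gbd y 2 - eN * Gbd y 0) by ring, hbd, Complex.mul_conj',
    ← Complex.ofReal_pow]
  simp only [Complex.add_re, Complex.mul_re, Complex.sub_re, Complex.sub_im,
    Complex.ofReal_re, Complex.ofReal_im, hreP, hreN]
  ring
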